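/- Let α > 0 and let f and g be probability measures on ℝ such that M_{2+α} := max{∫_ℝ |x|^{2+α} df(x), ∫_ℝ |x|^{2+α} dg(x)} < ∞. Then W_2(f,g)^2 ≤ 2^{(2+α)/(1+α)} (α^{1/(1+α)} + α^{−α/(1+α)}) · M_{2+α}^{1/(1+α)} · W_1(f,g)^{α/(1+α)}. -/

import Mathlib

open MeasureTheory
open scoped ENNReal NNReal

noncomputable section

/-- `π` is a coupling of the probability measures `f` and `g` on `ℝ`. -/
def IsCouplingR (π : Measure (ℝ × ℝ)) (f g : Measure ℝ) : Prop :=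
  π.map Prod.fst = f ∧ π.map Prod.snd = g

/-- The Wasserstein distance of order `p` between probability measures on `ℝ`. -/
def WassersteinR (p : ℝ) (f g : Measure ℝ) : ℝ≥0∞ :=
  (⨅ π : {π : Measure (ℝ × ℝ) // IsCouplingR π f g},
    ∫⁻ x, ENNReal.ofReal (|x.1 - x.2| ^ p) ∂π.1) ^ (1 / p)

/-- The Fourier transform of the measure `f`. -/
def fourierT (f : Measure ℝ) (ξ : ℝ) : ℂ :=
  ∫ x, Complex.exp (-(Complex.I * (x : ℂ) * (ξ : ℂ))) ∂f

/-- The Toscani (Fourier-based) distance of order `s` between probability measures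
on `ℝ`. -/
def ToscaniR (s : ℝ) (f g : Measure ℝ) : ℝ≥0∞ :=
  ⨆ ξ : {ξ : ℝ // ξ ≠ 0}, ENNReal.ofReal (‖fourierT f ξ - fourierT g ξ‖ / |ξ.1| ^ s)

/-- The cumulative distribution function of the measure `f`. -/
def cdfR (f : Measure ℝ) (x : ℝ) : ℝ := (f (Set.Iic x)).toReal

namespace WassersteinAux

open Real

/-- Pointwise truncation inequality. -/
lemma aux_ptwise (α R t : ℝ) (hα : 0 < α) (hR : 0 < R) (ht : 0 ≤ t) :
    t ^ (2:ℝ) ≤ R * t + R ^ (-α) * t ^ (2 + α) := by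
  rcases le_or_gt t R with h | h
  · have h1 : t ^ (2:ℝ) ≤ R * t := by
      rw [show (2:ℝ) = 1 + 1 by norm_num, rpow_add' ht (by norm_num), rpow_one]
      exact mul_le_mul_of_nonneg_right (by simpa using h) ht
    have h2 : 0 ≤ R ^ (-α) * t ^ (2 + α) :=
      mul_nonneg (rpow_nonneg hR.le _) (rpow_nonneg ht _)
    linarith
  · have ht0 : 0 < t := hR.trans h
    have h1 : t ^ (2:ℝ) ≤ R ^ (-α) * t ^ (2 + α) := by
      rw [rpow_add ht0, rpow_neg hR.le, mul_comm, mul_assoc]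
      have h3 : 1 ≤ (R ^ α)⁻¹ * t ^ α := by
        rw [inv_mul_eq_div, le_div_iff₀ (rpow_pos_of_pos hR _), one_mul]
        exact rpow_le_rpow hR.le h.le hα.le
      nlinarith [mul_le_mul_of_nonneg_left h3 (rpow_nonneg ht (2:ℝ))]
    have h2 : 0 ≤ R * t := mul_nonneg hR.le ht
    linarith

/-- Optimization identity for the choice `R = (α B / A) ^ (1/(1+α))`. -/
lemma aux_opt (α A B : ℝ) (hα : 0 < α) (hA : 0 < A) (hB : 0 < B) :
    ((α * B / A) ^ (1/(1+α))) * A + ((α * B / A) ^ (1/(1+α))) ^ (-α) * B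
      = (α ^ (1/(1+α)) + α ^ (-α/(1+α))) * B ^ (1/(1+α)) * A ^ (α/(1+α)) := by
  have hs : (0:ℝ) < 1 + α := by linarith
  have hq : (0:ℝ) ≤ α * B / A := by positivity
  set β := 1/(1+α) with hβ
  set θ := α/(1+α) with hθdef
  have hθβ : θ + β = 1 := by rw [hβ, hθdef]; field_simp; ring
  have eA : A / A ^ β = A ^ θ := by
    rw [eq_comm, eq_div_iff (rpow_pos_of_pos hA β).ne', ← rpow_add hA, hθβ, rpow_one]
  have eB : B / B ^ θ = B ^ β := by
    rw [eq_comm, eq_div_iff (rpow_pos_of_pos hB θ).ne', ← rpow_add hB, add_comm, hθβ, rpow_one]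
  have h1 : ((α * B / A) ^ β) * A = α ^ β * B ^ β * A ^ θ := by
    rw [div_rpow (by positivity) hA.le, mul_rpow hα.le hB.le]
    calc α ^ β * B ^ β / A ^ β * A = α ^ β * B ^ β * (A / A ^ β) := by ring
      _ = α ^ β * B ^ β * A ^ θ := by rw [eA]
  have h2 : ((α * B / A) ^ β) ^ (-α) * B = α ^ (-θ) * B ^ β * A ^ θ := by
    rw [← rpow_mul hq, show β * (-α) = -θ by rw [hβ, hθdef]; ring, rpow_neg hq,
      div_rpow (by positivity) hA.le, mul_rpow hα.le hB.le]
    have hne1 : α ^ θ ≠ 0 := (rpow_pos_of_pos hα θ).ne'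
    have hne2 : B ^ θ ≠ 0 := (rpow_pos_of_pos hB θ).ne'
    have hne3 : A ^ θ ≠ 0 := (rpow_pos_of_pos hA θ).ne'
    calc (α ^ θ * B ^ θ / A ^ θ)⁻¹ * B = (B / B ^ θ) * A ^ θ * (α ^ θ)⁻¹ := by
          field_simp
      _ = B ^ β * A ^ θ * (α ^ θ)⁻¹ := by rw [eB]
      _ = α ^ (-θ) * B ^ β * A ^ θ := by rw [rpow_neg hα.le]; ring
  rw [h1, h2, neg_div, ← hθdef]; ring

/-- Convexity-type bound for the `(2+α)`-th moment of a difference. -/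
lemma aux_mom (α x y : ℝ) (hα : 0 < α) :
    |x - y| ^ (2+α) ≤ 2 ^ (1+α) * (|x| ^ (2+α) + |y| ^ (2+α)) := by
  have hp : (1:ℝ) ≤ 2 + α := by linarith
  have h0 : |x - y| ^ (2+α) ≤ (|x| + |y|) ^ (2+α) :=
    rpow_le_rpow (abs_nonneg _)
      (by have := abs_add_le x (-y); simpa [sub_eq_add_neg] using this) (by linarith)
  have h1 := NNReal.rpow_add_le_mul_rpow_add_rpow ‖x‖₊ ‖y‖₊ hp
  have h2 : (|x| + |y|) ^ (2+α) ≤ (2:ℝ) ^ (2+α-1) * (|x| ^ (2+α) + |y| ^ (2+α)) := by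
    calc (|x| + |y|) ^ (2+α) = ((‖x‖₊ + ‖y‖₊ : ℝ≥0) : ℝ) ^ (2+α) := by
          push_cast [Real.nnnorm_abs]; simp [Real.norm_eq_abs]
      _ ≤ (((2:ℝ≥0) ^ (2+α-1) * (‖x‖₊ ^ (2+α) + ‖y‖₊ ^ (2+α)) : ℝ≥0) : ℝ) := by
          rw [← NNReal.coe_rpow]
          exact_mod_cast h1
      _ = (2:ℝ) ^ (2+α-1) * (|x| ^ (2+α) + |y| ^ (2+α)) := by
          push_cast [NNReal.coe_rpow]
          simp [Real.norm_eq_abs]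
  calc |x - y| ^ (2+α) ≤ (|x| + |y|) ^ (2+α) := h0
    _ ≤ (2:ℝ) ^ (2+α-1) * (|x| ^ (2+α) + |y| ^ (2+α)) := h2
    _ = 2 ^ (1+α) * (|x| ^ (2+α) + |y| ^ (2+α)) := by
        rw [show (2:ℝ)+α-1 = 1+α by ring]

/-- If the `(2+α)`-moment integral vanishes, the measure is concentrated at `0`. -/
lemma aux_ae_zero (α : ℝ) (hα : 0 < α) (μ : Measure ℝ)
    (h : Integrable (fun x : ℝ => |x| ^ (2+α)) μ)
    (h0 : ∫ x, |x| ^ (2+α) ∂μ = 0) : ∀ᵐ x ∂μ, x = 0 := by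
  have hnn : 0 ≤ fun x : ℝ => |x| ^ (2+α) := fun x => rpow_nonneg (abs_nonneg x) _
  have := (integral_eq_zero_iff_of_nonneg hnn h).1 h0
  filter_upwards [this] with x hx
  simp only [Pi.zero_apply] at hx
  have : |x| = 0 := by
    by_contra hne
    have hpos : 0 < |x| := lt_of_le_of_ne (abs_nonneg x) (Ne.symm hne)
    exact absurd hx (rpow_pos_of_pos hpos _).ne'
  simpa [abs_eq_zero] using this

end WassersteinAux

open WassersteinAux Real in
/-- For `α > 0` and probability measures `f, g` on `ℝ` with finite
moments of order `2 + α`, setting `M_{2+α} := max{∫ |x|^{2+α} df, ∫ |x|^{2+α} dg}`,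
one has
`W₂(f,g)² ≤ 2^{(2+α)/(1+α)} (α^{1/(1+α)} + α^{-α/(1+α)}) · M_{2+α}^{1/(1+α)} · W₁(f,g)^{α/(1+α)}`. -/
theorem wasserstein_two_sq_le_wasserstein_one_real (α : ℝ) (hα : 0 < α) (f g : Measure ℝ)
    [IsProbabilityMeasure f] [IsProbabilityMeasure g]
    (hf : Integrable (fun x : ℝ => |x| ^ (2 + α)) f)
    (hg : Integrable (fun x : ℝ => |x| ^ (2 + α)) g) :
    WassersteinR 2 f g ^ 2 ≤
      ENNReal.ofReal
          ((2 : ℝ) ^ ((2 + α) / (1 + α)) * (α ^ (1 / (1 + α)) + α ^ (-α / (1 + α))) *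
            (max (∫ x, |x| ^ (2 + α) ∂f) (∫ x, |x| ^ (2 + α) ∂g)) ^ (1 / (1 + α))) *
        WassersteinR 1 f g ^ (α / (1 + α)) := by
  classical
  set Mf := ∫ x, |x| ^ (2 + α) ∂f with hMfdef
  set Mg := ∫ x, |x| ^ (2 + α) ∂g with hMgdef
  set M := max Mf Mg with hMdef
  have hs : (0:ℝ) < 1 + α := by linarith
  have hθ : 0 < α / (1 + α) := by positivity
  have hMf0 : 0 ≤ Mf := integral_nonneg fun x => rpow_nonneg (abs_nonneg x) _
  have hMg0 : 0 ≤ Mg := integral_nonneg fun x => rpow_nonneg (abs_nonneg x) _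
  have hM0 : 0 ≤ M := le_trans hMf0 (le_max_left _ _)
  -- the index type of couplings
  have hprod : IsCouplingR (f.prod g) f g := by
    constructor
    · simp [Measure.map_fst_prod]
    · simp [Measure.map_snd_prod]
  haveI hne : Nonempty {ρ : Measure (ℝ × ℝ) // IsCouplingR ρ f g} := ⟨⟨f.prod g, hprod⟩⟩
  -- measurability facts
  have meas_t : Measurable fun x : ℝ × ℝ => |x.1 - x.2| :=
    (measurable_fst.sub measurable_snd).abs
  have meas2 : Measurable fun x : ℝ × ℝ => ENNReal.ofReal (|x.1 - x.2| ^ (2:ℝ)) := by fun_prop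
  have measp : ∀ c : ℝ, Measurable fun x : ℝ × ℝ => ENNReal.ofReal (|x.1 - x.2| ^ c) := by
    intro c; fun_prop
  have measm : Measurable fun x : ℝ => ENNReal.ofReal (|x| ^ (2+α)) := by fun_prop
  -- rewrite the two Wasserstein quantities
  have h2eq : WassersteinR 2 f g ^ 2 =
      ⨅ ρ : {ρ : Measure (ℝ × ℝ) // IsCouplingR ρ f g},
        ∫⁻ x, ENNReal.ofReal (|x.1 - x.2| ^ (2:ℝ)) ∂ρ.1 := by
    rw [WassersteinR, ← ENNReal.rpow_natCast _ 2, ← ENNReal.rpow_mul]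
    norm_num
  have h1eq : WassersteinR 1 f g =
      ⨅ ρ : {ρ : Measure (ℝ × ℝ) // IsCouplingR ρ f g},
        ∫⁻ x, ENNReal.ofReal (|x.1 - x.2|) ∂ρ.1 := by
    rw [WassersteinR]
    simp [Real.rpow_one]
  -- lintegral forms of the moments
  have lMf : ∫⁻ x, ENNReal.ofReal (|x| ^ (2+α)) ∂f = ENNReal.ofReal Mf :=
    (ofReal_integral_eq_lintegral_ofReal hf
      (Filter.Eventually.of_forall fun x => rpow_nonneg (abs_nonneg x) _)).symm
  have lMg : ∫⁻ x, ENNReal.ofReal (|x| ^ (2+α)) ∂g = ENNReal.ofReal Mg :=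
    (ofReal_integral_eq_lintegral_ofReal hg
      (Filter.Eventually.of_forall fun x => rpow_nonneg (abs_nonneg x) _)).symm
  rcases eq_or_lt_of_le hM0 with hM | hM
  · -- degenerate case : both measures are concentrated at 0
    have hMf : Mf = 0 := le_antisymm ((le_max_left Mf Mg).trans hM.ge) hMf0
    have hMg : Mg = 0 := le_antisymm ((le_max_right Mf Mg).trans hM.ge) hMg0
    have haef : ∀ᵐ x ∂f, x = 0 := aux_ae_zero α hα f hf hMf
    have haeg : ∀ᵐ x ∂g, x = 0 := aux_ae_zero α hα g hg hMg
    have hms : MeasurableSet {x : ℝ | x = 0} := by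
      simpa [Set.setOf_eq_eq_singleton] using measurableSet_singleton (0:ℝ)
    have haefst : ∀ᵐ p ∂(f.prod g), p.1 = 0 := by
      rw [← hprod.1] at haef
      exact (ae_map_iff measurable_fst.aemeasurable hms).mp haef
    have haesnd : ∀ᵐ p ∂(f.prod g), p.2 = 0 := by
      rw [← hprod.2] at haeg
      exact (ae_map_iff measurable_snd.aemeasurable hms).mp haeg
    have h0 : ∫⁻ p, ENNReal.ofReal (|p.1 - p.2| ^ (2:ℝ)) ∂(f.prod g) = 0 := by
      rw [lintegral_eq_zero_iff meas2]
      filter_upwards [haefst, haesnd] with p h1 h2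
      simp [h1, h2]
    rw [h2eq]
    refine le_trans (iInf_le _ ⟨f.prod g, hprod⟩) ?_
    rw [h0]
    exact zero_le
  · -- main case : `M > 0`
    set B := (2:ℝ) ^ (2+α) * M with hBdef
    have hB : 0 < B := by positivity
    set C := (2 : ℝ) ^ ((2 + α) / (1 + α)) * (α ^ (1 / (1 + α)) + α ^ (-α / (1 + α))) *
      M ^ (1 / (1 + α)) with hCdef
    have hC : 0 < C := by positivity
    have hBC : (α ^ (1/(1+α)) + α ^ (-α/(1+α))) * B ^ (1/(1+α)) = C := by
      rw [hBdef, hCdef, Real.mul_rpow (by positivity) hM.le,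
        ← Real.rpow_mul (by norm_num : (0:ℝ) ≤ 2),
        show (2+α) * (1/(1+α)) = (2+α)/(1+α) by ring]
      ring
    have key : ∀ ρ : {ρ : Measure (ℝ × ℝ) // IsCouplingR ρ f g},
        ∫⁻ x, ENNReal.ofReal (|x.1 - x.2| ^ (2:ℝ)) ∂ρ.1 ≤
          ENNReal.ofReal C * (∫⁻ x, ENNReal.ofReal (|x.1 - x.2|) ∂ρ.1) ^ (α/(1+α)) := by
      rintro ⟨ρ, hc1, hc2⟩
      dsimp only
      -- moment bound for the coupling
      have hJ : ∫⁻ p, ENNReal.ofReal (|p.1 - p.2| ^ (2+α)) ∂ρ ≤ ENNReal.ofReal B := by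
        calc ∫⁻ p, ENNReal.ofReal (|p.1 - p.2| ^ (2+α)) ∂ρ
            ≤ ∫⁻ p, (ENNReal.ofReal ((2:ℝ)^(1+α)) *
              (ENNReal.ofReal (|p.1| ^ (2+α)) + ENNReal.ofReal (|p.2| ^ (2+α)))) ∂ρ := by
              apply lintegral_mono
              intro p
              dsimp only
              rw [← ENNReal.ofReal_add (by positivity) (by positivity),
                ← ENNReal.ofReal_mul (by positivity)]
              exact ENNReal.ofReal_le_ofReal (aux_mom α p.1 p.2 hα)
          _ = ENNReal.ofReal ((2:ℝ)^(1+α)) *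
              ((∫⁻ p, ENNReal.ofReal (|p.1| ^ (2+α)) ∂ρ) +
                ∫⁻ p, ENNReal.ofReal (|p.2| ^ (2+α)) ∂ρ) := by
              rw [lintegral_const_mul _ (by fun_prop), lintegral_add_left (by fun_prop)]
          _ = ENNReal.ofReal ((2:ℝ)^(1+α)) * (ENNReal.ofReal Mf + ENNReal.ofReal Mg) := by
              rw [← lMf, ← lMg, ← hc1, ← hc2,
                lintegral_map measm measurable_fst, lintegral_map measm measurable_snd]
          _ ≤ ENNReal.ofReal B := by
              rw [← ENNReal.ofReal_add hMf0 hMg0, ← ENNReal.ofReal_mul (by positivity)]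
              apply ENNReal.ofReal_le_ofReal
              have h2a : (2:ℝ) ^ (1+α) * 2 = 2 ^ (2+α) := by
                have h := Real.rpow_add (by norm_num : (0:ℝ) < 2) (1+α) 1
                rw [Real.rpow_one] at h
                rw [← h, show (1:ℝ)+α+1 = 2+α by ring]
              have hMfM : Mf ≤ M := le_max_left _ _
              have hMgM : Mg ≤ M := le_max_right _ _
              have h2p : (0:ℝ) < 2 ^ (1+α) := by positivity
              rw [hBdef]
              nlinarith
      have measT1 : Measurable fun p : ℝ × ℝ => ENNReal.ofReal |p.1 - p.2| := by fun_prop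
      by_cases hA0 : (∫⁻ p, ENNReal.ofReal |p.1 - p.2| ∂ρ) = 0
      · have hae := (lintegral_eq_zero_iff measT1).1 hA0
        have h0 : ∫⁻ p, ENNReal.ofReal (|p.1 - p.2| ^ (2:ℝ)) ∂ρ = 0 := by
          rw [lintegral_eq_zero_iff meas2]
          filter_upwards [hae] with p hp
          simp only [Pi.zero_apply] at hp ⊢
          have h1 : |p.1 - p.2| = 0 :=
            le_antisymm (ENNReal.ofReal_eq_zero.1 hp) (abs_nonneg _)
          rw [h1]
          simp
        rw [h0]
        exact zero_le
      · by_cases hAt : (∫⁻ p, ENNReal.ofReal |p.1 - p.2| ∂ρ) = ⊤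
        · rw [hAt, ENNReal.top_rpow_of_pos hθ,
            ENNReal.mul_top (ENNReal.ofReal_pos.2 hC).ne']
          exact le_top
        · set A := (∫⁻ p, ENNReal.ofReal |p.1 - p.2| ∂ρ).toReal with hAdef
          have hIA : ∫⁻ p, ENNReal.ofReal |p.1 - p.2| ∂ρ = ENNReal.ofReal A := by
            rw [hAdef, ENNReal.ofReal_toReal hAt]
          have hApos : 0 < A := by
            rw [hAdef]
            exact ENNReal.toReal_pos hA0 hAt
          set R := (α * B / A) ^ (1/(1+α)) with hRdef
          have hR : 0 < R := by
            rw [hRdef]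
            positivity
          calc ∫⁻ p, ENNReal.ofReal (|p.1 - p.2| ^ (2:ℝ)) ∂ρ
              ≤ ∫⁻ p, (ENNReal.ofReal R * ENNReal.ofReal |p.1 - p.2| +
                ENNReal.ofReal (R ^ (-α)) * ENNReal.ofReal (|p.1 - p.2| ^ (2+α))) ∂ρ := by
                apply lintegral_mono
                intro p
                dsimp only
                rw [← ENNReal.ofReal_mul hR.le,
                  ← ENNReal.ofReal_mul (Real.rpow_nonneg hR.le _),
                  ← ENNReal.ofReal_add (by positivity) (by positivity)]
                exact ENNReal.ofReal_le_ofReal (aux_ptwise α R _ hα hR (abs_nonneg _))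
            _ = ENNReal.ofReal R * (∫⁻ p, ENNReal.ofReal |p.1 - p.2| ∂ρ) +
                ENNReal.ofReal (R ^ (-α)) *
                  ∫⁻ p, ENNReal.ofReal (|p.1 - p.2| ^ (2+α)) ∂ρ := by
                rw [lintegral_add_left (by fun_prop), lintegral_const_mul _ (by fun_prop),
                  lintegral_const_mul _ (by fun_prop)]
            _ ≤ ENNReal.ofReal R * ENNReal.ofReal A +
                ENNReal.ofReal (R ^ (-α)) * ENNReal.ofReal B := by
                exact add_le_add (mul_le_mul_right hIA.le _) (mul_le_mul_right hJ _)
            _ = ENNReal.ofReal (R * A + R ^ (-α) * B) := by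
                rw [← ENNReal.ofReal_mul hR.le,
                  ← ENNReal.ofReal_mul (Real.rpow_nonneg hR.le _),
                  ← ENNReal.ofReal_add (by positivity) (by positivity)]
            _ = ENNReal.ofReal (C * A ^ (α/(1+α))) := by
                rw [hRdef, aux_opt α A B hα hApos hB, ← hBC]
            _ = ENNReal.ofReal C * (ENNReal.ofReal A) ^ (α/(1+α)) := by
                rw [ENNReal.ofReal_mul hC.le,
                  ENNReal.ofReal_rpow_of_nonneg hApos.le hθ.le]
            _ = ENNReal.ofReal C *
                (∫⁻ p, ENNReal.ofReal |p.1 - p.2| ∂ρ) ^ (α/(1+α)) := by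
                rw [hIA]
    rw [h2eq, h1eq]
    calc (⨅ ρ : {ρ : Measure (ℝ × ℝ) // IsCouplingR ρ f g},
            ∫⁻ x, ENNReal.ofReal (|x.1 - x.2| ^ (2:ℝ)) ∂ρ.1)
        ≤ ⨅ ρ : {ρ : Measure (ℝ × ℝ) // IsCouplingR ρ f g},
            ENNReal.ofReal C * (∫⁻ x, ENNReal.ofReal (|x.1 - x.2|) ∂ρ.1) ^ (α/(1+α)) :=
          iInf_mono key
      _ = ENNReal.ofReal C * ⨅ ρ : {ρ : Measure (ℝ × ℝ) // IsCouplingR ρ f g},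
            (∫⁻ x, ENNReal.ofReal (|x.1 - x.2|) ∂ρ.1) ^ (α/(1+α)) :=
          (ENNReal.mul_iInf_of_ne (ENNReal.ofReal_pos.2 hC).ne' ENNReal.ofReal_ne_top).symm
      _ = ENNReal.ofReal C * (⨅ ρ : {ρ : Measure (ℝ × ℝ) // IsCouplingR ρ f g},
            ∫⁻ x, ENNReal.ofReal (|x.1 - x.2|) ∂ρ.1) ^ (α/(1+α)) := by
          congr 1
          exact ((ENNReal.orderIsoRpow _ hθ).map_iInf _).symm

end
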